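/- For each integer n ≥ 1 the polynomial of Proposition 2.2 is unique: if f and f' in ℤ[x_1, …, x_n] are both homogeneous of degree n with respect to the grading in which x_i has degree i, and both satisfy f(1 + x_1, x_1 + x_2, …, x_{n-1} + x_n) = 1 + f(x_1, …, x_n) and f'(1 + x_1, x_1 + x_2, …, x_{n-1} + x_n) = 1 + f'(x_1, …, x_n), then f = f'. -/

import Mathlib

open MvPolynomial

/-- The shift substitution on `ℤ[x_1, …, x_n]` (variable `i : Fin n` represents `x_{i+1}`),
sending `x_i ↦ x_{i-1} + x_i` with the convention `x_0 = 1`. -/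
noncomputable def shiftSub (n : ℕ) :
    MvPolynomial (Fin n) ℤ →ₐ[ℤ] MvPolynomial (Fin n) ℤ :=
  aeval (fun i : Fin n =>
    (if (i : ℕ) = 0 then 1
     else X (⟨(i : ℕ) - 1, Nat.lt_of_le_of_lt (Nat.sub_le _ _) i.2⟩ : Fin n)) + X i)

namespace NewtonUnique

open Finset

lemma multiset_esymm_cons {R : Type*} [CommSemiring R] (a : R) (s : Multiset R) (k : ℕ) :
    (a ::ₘ s).esymm (k+1) = s.esymm (k+1) + a * s.esymm k := by
  simp only [Multiset.esymm, Multiset.powersetCard_cons, Multiset.map_add, Multiset.sum_add,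
    Multiset.map_map, Function.comp_def, Multiset.prod_cons, Multiset.sum_map_mul_left]

lemma sub1_esymm (N k : ℕ) :
    aeval (Fin.cases 1 X : Fin (N+1) → MvPolynomial (Fin N) ℤ) (esymm (Fin (N+1)) ℤ (k+1))
      = esymm (Fin N) ℤ (k+1) + esymm (Fin N) ℤ k := by
  rw [aeval_esymm_eq_multiset_esymm]
  have h : (Multiset.map (Fin.cases 1 X : Fin (N+1) → MvPolynomial (Fin N) ℤ)
      (univ : Finset (Fin (N+1))).val)
      = 1 ::ₘ Multiset.map X (univ : Finset (Fin N)).val := by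
    rw [Fin.univ_succ, Finset.cons_val, Multiset.map_cons, Finset.map_val, Multiset.map_map]
    simp [Function.comp_def]
  rw [h, multiset_esymm_cons, esymm_eq_multiset_esymm, one_mul]

lemma esymm_homog (N k : ℕ) : (esymm (Fin N) ℤ k).IsHomogeneous k := by
  rw [esymm, ← mem_homogeneousSubmodule]
  apply Submodule.sum_mem
  intro t ht
  rw [mem_homogeneousSubmodule]
  have := IsHomogeneous.prod t X (fun _ => 1) (fun i _ => isHomogeneous_X ℤ i)
  simpa [mem_powersetCard_univ.mp ht] using this

lemma degree_univ_sum {m : ℕ} (d : Fin m →₀ ℕ) : d.degree = ∑ i, d i := by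
  rw [Finsupp.degree]
  exact Finset.sum_subset (subset_univ _) (fun i _ h => Finsupp.notMem_support_iff.mp h)

/-- Setting the first variable to 1 is injective on homogeneous polynomials. -/
lemma sub1_inj_homog {N n : ℕ} (p : MvPolynomial (Fin (N+1)) ℤ) (hp : p.IsHomogeneous n)
    (h : aeval (Fin.cases 1 X : Fin (N+1) → MvPolynomial (Fin N) ℤ) p = 0) : p = 0 := by
  have key : ∀ e : Fin (N+1) →₀ ℕ,
      aeval (Fin.cases 1 X : Fin (N+1) → MvPolynomial (Fin N) ℤ) (monomial e (coeff e p))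
        = monomial e.tail (coeff e p) := by
    intro e
    rw [aeval_monomial, monomial_eq]
    congr 1
    rw [Finsupp.prod_fintype _ _ (fun i => pow_zero _),
      Finsupp.prod_fintype _ _ (fun i => pow_zero _), Fin.prod_univ_succ]
    simp [Finsupp.tail_apply]
  ext d
  rw [coeff_zero]
  by_cases hd : d.degree = n
  · have h2 : coeff d.tail (aeval (Fin.cases 1 X : Fin (N+1) → MvPolynomial (Fin N) ℤ) p)
        = coeff d p := by
      conv_lhs => rw [p.as_sum, map_sum]
      simp_rw [key]
      rw [coeff_sum]
      simp_rw [coeff_monomial]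
      refine (Finset.sum_eq_single d ?_ ?_).trans (if_pos rfl)
      · intro e he hne
        rw [if_neg]
        intro hte
        apply hne
        have hde : e.degree = n := by
          by_contra hq
          exact (mem_support_iff.mp he) (hp.coeff_eq_zero hq)
        have hsum : ∑ i : Fin N, e i.succ = ∑ i : Fin N, d i.succ := by
          refine Finset.sum_congr rfl (fun i _ => ?_)
          have := Finsupp.ext_iff.mp hte i
          simpa [Finsupp.tail_apply] using this
        have h0 : e 0 = d 0 := by
          rw [degree_univ_sum, Fin.sum_univ_succ] at hde hd
          omega
        calc e = Finsupp.cons (e 0) e.tail := (Finsupp.cons_tail e).symm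
          _ = Finsupp.cons (d 0) d.tail := by rw [h0, hte]
          _ = d := Finsupp.cons_tail d
      · intro hd'
        rw [if_pos rfl]
        exact notMem_support_iff.mp hd'
    rw [← h2, h, coeff_zero]
  · exact hp.coeff_eq_zero hd

lemma aeval_esymm_homog {n N : ℕ} (g : MvPolynomial (Fin n) ℤ)
    (hg : g.IsWeightedHomogeneous (fun i : Fin n => (i : ℕ) + 1) n) :
    ((aeval (fun i : Fin n => esymm (Fin N) ℤ ((i : ℕ) + 1))) g).IsHomogeneous n := by
  have hsum : (aeval (fun i : Fin n => esymm (Fin N) ℤ ((i : ℕ) + 1))) g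
      = ∑ d ∈ g.support, (aeval (fun i : Fin n => esymm (Fin N) ℤ ((i : ℕ) + 1)))
          (monomial d (coeff d g)) := by
    conv_lhs => rw [g.as_sum]
    rw [map_sum]
  rw [hsum, ← mem_homogeneousSubmodule]
  apply Submodule.sum_mem
  intro d hd
  rw [mem_homogeneousSubmodule, aeval_monomial]
  have h1 : (Finsupp.prod d fun i k => esymm (Fin N) ℤ ((i : ℕ) + 1) ^ k).IsHomogeneous
      (Finsupp.sum d fun i k => ((i : ℕ) + 1) * k) := by
    rw [Finsupp.prod, Finsupp.sum]
    exact IsHomogeneous.prod _ _ _ (fun i _ => (esymm_homog N ((i : ℕ)+1)).pow (d i))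
  have h2 : (Finsupp.sum d fun i k => ((i : ℕ) + 1) * k) = n := by
    have := hg (mem_support_iff.mp hd)
    rw [Finsupp.weight_apply] at this
    refine Eq.trans ?_ this
    rw [Finsupp.sum, Finsupp.sum]
    exact Finset.sum_congr rfl (fun i _ => by simp [mul_comm])
  rw [h2] at h1
  simpa using (isHomogeneous_C (Fin N) ((coeff d g : ℤ))).mul h1

lemma main {n : ℕ} (hn : 1 ≤ n) (g : MvPolynomial (Fin n) ℤ)
    (hg : g.IsWeightedHomogeneous (fun i : Fin n => (i : ℕ) + 1) n)
    (hfix : shiftSub n g = g) :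
    ∀ N, aeval (fun i : Fin n => esymm (Fin N) ℤ ((i : ℕ) + 1)) g = 0 := by
  intro N
  induction N with
  | zero =>
    have h0 : (fun i : Fin n => esymm (Fin 0) ℤ ((i : ℕ) + 1)) = fun _ => 0 := by
      funext i
      rw [esymm]
      have : (univ : Finset (Fin 0)) = ∅ := rfl
      rw [this, Finset.powersetCard_eq_empty.mpr (by simp), Finset.sum_empty]
    rw [h0, aeval_zero']
    have : constantCoeff g = 0 := by
      have := hg.coeff_eq_zero 0 (by simp; omega)
      simpa [constantCoeff_eq] using this
    simp [this]
  | succ N ih =>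
    apply sub1_inj_homog _ (aeval_esymm_homog g hg)
    have comm : (aeval (Fin.cases 1 X : Fin (N+1) → MvPolynomial (Fin N) ℤ)).comp
          (aeval (fun i : Fin n => esymm (Fin (N+1)) ℤ ((i : ℕ) + 1)))
        = (aeval (fun i : Fin n => esymm (Fin N) ℤ ((i : ℕ) + 1))).comp (shiftSub n) := by
      apply algHom_ext
      intro i
      rw [AlgHom.comp_apply, AlgHom.comp_apply, aeval_X, shiftSub, aeval_X, sub1_esymm]
      rw [map_add, aeval_X]
      by_cases hi : (i : ℕ) = 0
      · rw [if_pos hi, map_one, hi]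
        simp [add_comm]
      · rw [if_neg hi, aeval_X]
        have : (i : ℕ) - 1 + 1 = (i : ℕ) := Nat.succ_pred_eq_of_pos (Nat.pos_of_ne_zero hi)
        simp [this, add_comm]
    calc aeval (Fin.cases 1 X : Fin (N+1) → MvPolynomial (Fin N) ℤ)
          (aeval (fun i : Fin n => esymm (Fin (N+1)) ℤ ((i : ℕ) + 1)) g)
        = aeval (fun i : Fin n => esymm (Fin N) ℤ ((i : ℕ) + 1)) (shiftSub n g) := by
          exact congrFun (congrArg DFunLike.coe comm) g
      _ = 0 := by rw [hfix]; exact ih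

end NewtonUnique

theorem newton_polynomial_unique (n : ℕ) (hn : 1 ≤ n)
    (f f' : MvPolynomial (Fin n) ℤ)
    (hf : f.IsWeightedHomogeneous (fun i : Fin n => (i : ℕ) + 1) n)
    (hf' : f'.IsWeightedHomogeneous (fun i : Fin n => (i : ℕ) + 1) n)
    (he : shiftSub n f = 1 + f)
    (he' : shiftSub n f' = 1 + f') :
    f = f' := by
  set g := f - f' with hgdef
  have hg : g.IsWeightedHomogeneous (fun i : Fin n => (i : ℕ) + 1) n := by
    rw [← mem_weightedHomogeneousSubmodule] at hf hf' ⊢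
    exact Submodule.sub_mem _ hf hf'
  have hfix : shiftSub n g = g := by
    rw [hgdef, map_sub, he, he']
    ring
  have h0 : aeval (fun i : Fin n => esymm (Fin n) ℤ ((i : ℕ) + 1)) g = 0 :=
    NewtonUnique.main hn g hg hfix n
  have hinj := esymmAlgHom_fin_injective (R := ℤ) (n := n) (m := n) le_rfl
  have : g = 0 := by
    apply hinj
    apply Subtype.val_injective
    rw [esymmAlgHom_apply, esymmAlgHom_apply, h0, map_zero]
  rw [hgdef] at this
  exact sub_eq_zero.mp this
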